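/- Let β > 0. Define a sequence (a_k)_{k∈ℕ} of positive real numbers by a₁ := 1 and, for k ≥ 2, a_k := (1/(k−1)) Σ_{k₁,k₂ ∈ ℕ, k₁+k₂=k} (2k₂)^β a_{k₁} a_{k₂}. Then for every k ∈ ℕ one has a_k ≤ (π² 2^β)^{k−1} ((k−1)!)^{max(0, β−1)}. -/

import Mathlib

open Finset Real

private lemma sum_inv_sq_le (n : ℕ) : ∑ i ∈ Finset.Icc 1 n, (1:ℝ)/(i:ℝ)^2 ≤ 2 := by
  have h := hasSum_zeta_two
  have h1 : ∑ i ∈ Finset.Icc 1 n, (1:ℝ)/(i:ℝ)^2 ≤ π^2/6 := by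
    refine le_trans (Summable.sum_le_tsum _ (fun i _ => by positivity) h.summable) ?_
    exact le_of_eq h.tsum_eq
  nlinarith [Real.pi_lt_d2, Real.pi_gt_three]

private lemma antidiag_filter (k : ℕ) :
    (Finset.HasAntidiagonal.antidiagonal k).filter (fun p => 1 ≤ p.1 ∧ 1 ≤ p.2) =
      (Finset.Icc 1 (k-1)).image (fun i => (i, k - i)) := by
  ext ⟨x, y⟩
  simp only [Finset.mem_filter, Finset.HasAntidiagonal.mem_antidiagonal, Finset.mem_image, Finset.mem_Icc,
    Prod.mk.injEq]
  constructor
  · rintro ⟨hxy, hx, hy⟩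
    exact ⟨x, ⟨hx, by omega⟩, rfl, by omega⟩
  · rintro ⟨i, ⟨hi1, hi2⟩, rfl, rfl⟩
    omega

private lemma harm_le (k : ℕ) (hk : 2 ≤ k) :
    ∑ i ∈ Finset.Icc 1 (k-1), (1:ℝ)/((k-i : ℕ):ℝ) ≤ (k:ℝ)/2 := by
  have h : k - 1 = (k-2) + 1 := by omega
  rw [h, Finset.sum_Icc_succ_top (by omega)]
  have h1 : ∑ i ∈ Finset.Icc 1 (k-2), (1:ℝ)/((k-i : ℕ):ℝ) ≤ (Finset.Icc 1 (k-2)).card • ((1:ℝ)/2) := by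
    apply Finset.sum_le_card_nsmul
    intro i hi
    simp only [Finset.mem_Icc] at hi
    have h2 : (2:ℝ) ≤ ((k-i : ℕ):ℝ) := by
      have : 2 ≤ k - i := by omega
      exact_mod_cast this
    rw [div_le_div_iff₀ (by linarith) (by norm_num)]
    linarith
  rw [Nat.card_Icc, nsmul_eq_mul] at h1
  have h3 : (k - (k-2+1) : ℕ) = 1 := by omega
  rw [h3]
  have h4 : ((k-2+1-1 : ℕ):ℝ) = (k:ℝ) - 2 := by
    have h5 : (k-2+1-1 : ℕ) = k - 2 := by omega
    rw [h5]; push_cast [Nat.cast_sub (by omega : 2 ≤ k)]; ring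
  rw [h4] at h1
  norm_num at h1 ⊢
  linarith

private lemma key_sum (k : ℕ) (hk : 2 ≤ k) :
    ∑ p ∈ (Finset.HasAntidiagonal.antidiagonal k).filter (fun p => 1 ≤ p.1 ∧ 1 ≤ p.2),
      (1:ℝ)/((p.1:ℝ)^2*(p.2:ℝ)) ≤ π^2 * ((k:ℝ)-1)/(k:ℝ)^2 := by
  rw [antidiag_filter]
  rw [Finset.sum_image (fun x _ y _ h => by simpa using congrArg Prod.fst h)]
  simp only [Prod.fst, Prod.snd]
  rcases eq_or_lt_of_le hk with h2 | h3
  · -- k = 2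
    rw [← h2]
    norm_num
    nlinarith [Real.pi_gt_three]
  · -- k ≥ 3
    have hk3 : 3 ≤ k := h3
    have hK : (3:ℝ) ≤ (k:ℝ) := by exact_mod_cast hk3
    have step1 : ∀ i ∈ Finset.Icc 1 (k-1),
        (1:ℝ)/((i:ℝ)^2*(((i, k-i).2 : ℕ):ℝ)) ≤ 2/((k:ℝ)*(i:ℝ)^2) + 4/((k:ℝ)^2*((k-i : ℕ):ℝ)) := by
      intro i hi
      simp only [Finset.mem_Icc] at hi
      set I := (i:ℝ) with hI
      set J := ((k-i : ℕ):ℝ) with hJ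
      have hI1 : (1:ℝ) ≤ I := by rw [hI]; exact_mod_cast hi.1
      have hJ1 : (1:ℝ) ≤ J := by
        rw [hJ]
        have : 1 ≤ k - i := by omega
        exact_mod_cast this
      have hIJ : I + J = (k:ℝ) := by
        rw [hI, hJ]
        have : i + (k - i) = k := by omega
        exact_mod_cast this
      rcases le_or_gt (k:ℝ) (2*J) with hc | hc
      · have hb : (1:ℝ)/(I^2*J) ≤ 2/((k:ℝ)*I^2) := by
          rw [div_le_div_iff₀ (by positivity) (by positivity)]
          nlinarith
        have : (0:ℝ) ≤ 4/((k:ℝ)^2*J) := by positivity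
        linarith
      · have hc2 : (k:ℝ) < 2*I := by linarith
        have hb : (1:ℝ)/(I^2*J) ≤ 4/((k:ℝ)^2*J) := by
          rw [div_le_div_iff₀ (by positivity) (by positivity)]
          have h4 : (k:ℝ)^2 ≤ 4*I^2 := by nlinarith
          nlinarith [mul_le_mul_of_nonneg_right h4 (by linarith : (0:ℝ) ≤ J)]
        have : (0:ℝ) ≤ 2/((k:ℝ)*I^2) := by positivity
        linarith
    calc ∑ i ∈ Finset.Icc 1 (k-1), (1:ℝ)/((i:ℝ)^2*(((i, k-i).2 : ℕ):ℝ))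
        ≤ ∑ i ∈ Finset.Icc 1 (k-1), (2/((k:ℝ)*(i:ℝ)^2) + 4/((k:ℝ)^2*((k-i : ℕ):ℝ))) :=
          Finset.sum_le_sum step1
      _ = (2/(k:ℝ)) * ∑ i ∈ Finset.Icc 1 (k-1), (1:ℝ)/(i:ℝ)^2
            + (4/(k:ℝ)^2) * ∑ i ∈ Finset.Icc 1 (k-1), (1:ℝ)/((k-i : ℕ):ℝ) := by
          rw [Finset.sum_add_distrib, Finset.mul_sum, Finset.mul_sum]
          congr 1 <;> apply Finset.sum_congr rfl <;> intro i _ <;> field_simp <;> ring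
      _ ≤ (2/(k:ℝ)) * 2 + (4/(k:ℝ)^2) * ((k:ℝ)/2) := by
          have t1 := sum_inv_sq_le (k-1)
          have t2 := harm_le k hk
          have p1 : (0:ℝ) ≤ 2/(k:ℝ) := by positivity
          have p2 : (0:ℝ) ≤ 4/(k:ℝ)^2 := by positivity
          have := mul_le_mul_of_nonneg_left t1 p1
          have := mul_le_mul_of_nonneg_left t2 p2
          linarith
      _ ≤ π^2 * ((k:ℝ)-1)/(k:ℝ)^2 := by
          have hk0 : (0:ℝ) < k := by linarith
          have e : (2/(k:ℝ))*2 + (4/(k:ℝ)^2)*((k:ℝ)/2) = 6/(k:ℝ) := by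
            field_simp; ring
          rw [e, div_le_div_iff₀ hk0 (by positivity)]
          have h9 : (9:ℝ) ≤ π^2 := by nlinarith [Real.pi_gt_three]
          nlinarith [mul_le_mul_of_nonneg_right h9
              (mul_nonneg (by linarith : (0:ℝ) ≤ (k:ℝ)-1) hk0.le),
            mul_nonneg hk0.le (by linarith : (0:ℝ) ≤ (k:ℝ)-3)]

private lemma core_fac (β : ℝ) (k k1 k2 : ℕ) (h1 : 1 ≤ k1) (h2 : 1 ≤ k2)
    (hsum : k1 + k2 = k) :
    ((k2:ℝ))^β * ((k1-1).factorial:ℝ)^(max 0 (β-1)) * ((k2-1).factorial:ℝ)^(max 0 (β-1))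
      ≤ (k2:ℝ) * ((k-1).factorial:ℝ)^(max 0 (β-1)) := by
  have hk2R : (1:ℝ) ≤ (k2:ℝ) := by exact_mod_cast h2
  rcases le_total β 1 with hb | hb
  · rw [max_eq_left (by linarith)]
    simp only [Real.rpow_zero, mul_one]
    calc ((k2:ℝ))^β ≤ ((k2:ℝ))^(1:ℝ) :=
          Real.rpow_le_rpow_of_exponent_le hk2R hb
      _ = (k2:ℝ) := Real.rpow_one _
  · rw [max_eq_right (by linarith)]
    have hfac : ((k1-1).factorial * k2.factorial : ℕ) ≤ (k-1).factorial := by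
      have hd := Nat.factorial_mul_factorial_dvd_factorial_add (k1-1) k2
      have e : k1 - 1 + k2 = k - 1 := by omega
      rw [e] at hd
      exact Nat.le_of_dvd (k-1).factorial_pos hd
    have hk2pos : (0:ℝ) < (k2:ℝ) := by linarith
    have hsplit : ((k2:ℝ))^β = (k2:ℝ) * ((k2:ℝ))^(β-1) := by
      nth_rewrite 2 [← Real.rpow_one (k2:ℝ)]
      rw [← Real.rpow_add hk2pos]
      norm_num
    calc ((k2:ℝ))^β * ((k1-1).factorial:ℝ)^(β-1) * ((k2-1).factorial:ℝ)^(β-1)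
        = (k2:ℝ) * (((k2:ℝ))^(β-1) * ((k1-1).factorial:ℝ)^(β-1)
            * ((k2-1).factorial:ℝ)^(β-1)) := by rw [hsplit]; ring
      _ = (k2:ℝ) * (((k2:ℝ) * ((k1-1).factorial:ℝ) * ((k2-1).factorial:ℝ)) ^ (β-1)) := by
          rw [Real.mul_rpow (by positivity) (by positivity),
            Real.mul_rpow (by positivity) (by positivity)]
      _ ≤ (k2:ℝ) * (((k-1).factorial:ℝ)^(β-1)) := by
          apply mul_le_mul_of_nonneg_left _ (by positivity)
          apply Real.rpow_le_rpow (by positivity) _ (by linarith)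
          have e2 : (k2:ℝ) * ((k1-1).factorial:ℝ) * ((k2-1).factorial:ℝ)
              = (((k1-1).factorial * k2.factorial : ℕ):ℝ) := by
            have h3 : k2 * (k2-1).factorial = k2.factorial := Nat.mul_factorial_pred (by omega)
            push_cast [← h3]
            ring
          rw [e2]
          exact_mod_cast hfac


private lemma term_bound (β : ℝ) (k k1 k2 : ℕ) (h1 : 1 ≤ k1) (h2 : 1 ≤ k2)
    (hsum : k1 + k2 = k) :
    (2*(k2:ℝ))^β * (Real.pi^2 * 2^β)^(k1-1) * ((k1-1).factorial:ℝ)^(max 0 (β-1)) / (k1:ℝ)^2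
      * ((Real.pi^2 * 2^β)^(k2-1) * ((k2-1).factorial:ℝ)^(max 0 (β-1)) / (k2:ℝ)^2)
    ≤ (2:ℝ)^β * (Real.pi^2 * 2^β)^(k-2) * ((k-1).factorial:ℝ)^(max 0 (β-1))
      * (1/((k1:ℝ)^2 * (k2:ℝ))) := by
  set C := Real.pi^2 * (2:ℝ)^β with hC
  set γ := max 0 (β-1) with hγ
  have hk1pos : (0:ℝ) < (k1:ℝ) := by exact_mod_cast h1
  have hk2pos : (0:ℝ) < (k2:ℝ) := by exact_mod_cast h2
  have hpow : C^(k1-1) * C^(k2-1) = C^(k-2) := by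
    rw [← pow_add]; congr 1; omega
  have hrp : (2*(k2:ℝ))^β = 2^β * ((k2:ℝ))^β :=
    Real.mul_rpow (by norm_num) (by positivity)
  calc (2*(k2:ℝ))^β * C^(k1-1) * ((k1-1).factorial:ℝ)^γ / (k1:ℝ)^2
      * (C^(k2-1) * ((k2-1).factorial:ℝ)^γ / (k2:ℝ)^2)
      = (2^β * (C^(k1-1) * C^(k2-1)) / ((k1:ℝ)^2 * (k2:ℝ)^2))
          * (((k2:ℝ))^β * ((k1-1).factorial:ℝ)^γ * ((k2-1).factorial:ℝ)^γ) := by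
        rw [hrp]; ring
    _ = (2^β * C^(k-2) / ((k1:ℝ)^2 * (k2:ℝ)^2))
          * (((k2:ℝ))^β * ((k1-1).factorial:ℝ)^γ * ((k2-1).factorial:ℝ)^γ) := by
        rw [hpow]
    _ ≤ (2^β * C^(k-2) / ((k1:ℝ)^2 * (k2:ℝ)^2))
          * ((k2:ℝ) * ((k-1).factorial:ℝ)^γ) := by
        apply mul_le_mul_of_nonneg_left (core_fac β k k1 k2 h1 h2 hsum)
        have hCpos : (0:ℝ) < C := by
          rw [hC]; positivity
        positivity
    _ = 2^β * C^(k-2) * ((k-1).factorial:ℝ)^γ * (1/((k1:ℝ)^2 * (k2:ℝ))) := by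
        field_simp

theorem recursive_sequence_bound (β : ℝ) (hβ : 0 < β) (a : ℕ → ℝ)
    (ha1 : a 1 = 1)
    (hrec : ∀ k : ℕ, 2 ≤ k →
      a k = (1 / ((k : ℝ) - 1)) *
        ∑ p ∈ (Finset.HasAntidiagonal.antidiagonal k).filter (fun p => 1 ≤ p.1 ∧ 1 ≤ p.2),
          (2 * (p.2 : ℝ)) ^ β * a p.1 * a p.2) :
    ∀ k : ℕ, 1 ≤ k →
      a k ≤ (Real.pi ^ 2 * 2 ^ β) ^ (k - 1) * ((Nat.factorial (k - 1) : ℝ)) ^ (max 0 (β - 1)) := by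
  have hCpos : (0:ℝ) < Real.pi^2 * 2^β := by positivity
  -- nonnegativity
  have hnn : ∀ k, 1 ≤ k → 0 ≤ a k := by
    intro k
    induction k using Nat.strong_induction_on with
    | _ k ih =>
      intro hk
      rcases eq_or_lt_of_le hk with h1 | h2
      · rw [← h1, ha1]; norm_num
      · rw [hrec k h2]
        have hkR : (1:ℝ) ≤ (k:ℝ) - 1 := by
          have : (2:ℝ) ≤ (k:ℝ) := by exact_mod_cast h2
          linarith
        apply mul_nonneg (by positivity)
        apply Finset.sum_nonneg
        intro p hp
        simp only [Finset.mem_filter, Finset.HasAntidiagonal.mem_antidiagonal] at hp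
        have hp1 : p.1 < k := by omega
        have hp2 : p.2 < k := by omega
        have a1 := ih p.1 hp1 hp.2.1
        have a2 := ih p.2 hp2 hp.2.2
        have : (0:ℝ) ≤ (2*(p.2:ℝ))^β := by positivity
        positivity
  -- strengthened bound
  have main : ∀ k, 1 ≤ k → a k ≤
      (Real.pi^2 * 2^β)^(k-1) * ((k-1).factorial:ℝ)^(max 0 (β-1)) / (k:ℝ)^2 := by
    intro k
    induction k using Nat.strong_induction_on with
    | _ k ih =>
      intro hk
      rcases eq_or_lt_of_le hk with h1 | h2
      · rw [← h1, ha1]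
        norm_num
      · rw [hrec k h2]
        have hkR : (1:ℝ) ≤ (k:ℝ) - 1 := by
          have : (2:ℝ) ≤ (k:ℝ) := by exact_mod_cast h2
          linarith
        have hstep : ∑ p ∈ (Finset.HasAntidiagonal.antidiagonal k).filter (fun p => 1 ≤ p.1 ∧ 1 ≤ p.2),
            (2 * (p.2 : ℝ)) ^ β * a p.1 * a p.2 ≤
            ∑ p ∈ (Finset.HasAntidiagonal.antidiagonal k).filter (fun p => 1 ≤ p.1 ∧ 1 ≤ p.2),
            (2:ℝ)^β * (Real.pi^2 * 2^β)^(k-2) * ((k-1).factorial:ℝ)^(max 0 (β-1))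
              * (1/((p.1:ℝ)^2 * (p.2:ℝ))) := by
          apply Finset.sum_le_sum
          intro p hp
          simp only [Finset.mem_filter, Finset.HasAntidiagonal.mem_antidiagonal] at hp
          have hp1 : p.1 < k := by omega
          have hp2 : p.2 < k := by omega
          have b1 := ih p.1 hp1 hp.2.1
          have b2 := ih p.2 hp2 hp.2.2
          have hcoef : (0:ℝ) ≤ (2*(p.2:ℝ))^β := by positivity
          have hb1nn : (0:ℝ) ≤ (Real.pi^2*2^β)^(p.1-1) * ((p.1-1).factorial:ℝ)^(max 0 (β-1))
              / (p.1:ℝ)^2 := by positivity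
          calc (2 * (p.2 : ℝ)) ^ β * a p.1 * a p.2
              ≤ (2 * (p.2 : ℝ)) ^ β * ((Real.pi^2*2^β)^(p.1-1)
                  * ((p.1-1).factorial:ℝ)^(max 0 (β-1)) / (p.1:ℝ)^2) * a p.2 := by
                apply mul_le_mul_of_nonneg_right _ (hnn p.2 hp.2.2)
                exact mul_le_mul_of_nonneg_left b1 hcoef
            _ ≤ (2 * (p.2 : ℝ)) ^ β * ((Real.pi^2*2^β)^(p.1-1)
                  * ((p.1-1).factorial:ℝ)^(max 0 (β-1)) / (p.1:ℝ)^2)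
                * ((Real.pi^2*2^β)^(p.2-1) * ((p.2-1).factorial:ℝ)^(max 0 (β-1))
                  / (p.2:ℝ)^2) := by
                exact mul_le_mul_of_nonneg_left b2 (mul_nonneg hcoef hb1nn)
            _ ≤ (2:ℝ)^β * (Real.pi^2 * 2^β)^(k-2) * ((k-1).factorial:ℝ)^(max 0 (β-1))
                  * (1/((p.1:ℝ)^2 * (p.2:ℝ))) := by
                exact le_trans (le_of_eq (by ring))
                  (term_bound β k p.1 p.2 hp.2.1 hp.2.2 hp.1)
        have hB : (0:ℝ) ≤ (2:ℝ)^β * (Real.pi^2*2^β)^(k-2)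
            * ((k-1).factorial:ℝ)^(max 0 (β-1)) := by positivity
        have h5 : ∑ p ∈ (Finset.HasAntidiagonal.antidiagonal k).filter (fun p => 1 ≤ p.1 ∧ 1 ≤ p.2),
            (2 * (p.2 : ℝ)) ^ β * a p.1 * a p.2 ≤
            (2:ℝ)^β * (Real.pi^2*2^β)^(k-2) * ((k-1).factorial:ℝ)^(max 0 (β-1))
              * (Real.pi^2*((k:ℝ)-1)/(k:ℝ)^2) := by
          refine hstep.trans ?_
          rw [← Finset.mul_sum]
          exact mul_le_mul_of_nonneg_left (key_sum k h2) hB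
        refine le_trans (mul_le_mul_of_nonneg_left h5 (by positivity)) (le_of_eq ?_)
        have hpow2 : (Real.pi^2*(2:ℝ)^β)^(k-1) = (Real.pi^2*2^β)^(k-2) * (Real.pi^2*2^β) := by
          rw [← pow_succ]; congr 1; omega
        have hne : ((k:ℝ)-1) ≠ 0 := by linarith
        rw [hpow2]
        field_simp
  intro k hk
  calc a k ≤ (Real.pi^2 * 2^β)^(k-1) * ((k-1).factorial:ℝ)^(max 0 (β-1)) / (k:ℝ)^2 :=
        main k hk
    _ ≤ (Real.pi^2 * 2^β)^(k-1) * ((k-1).factorial:ℝ)^(max 0 (β-1)) := by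
        apply div_le_self (by positivity)
        have : (1:ℝ) ≤ (k:ℝ) := by exact_mod_cast hk
        nlinarith
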